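/- Let G be a finite simple graph, a a vertex of G, and G' = G \ {a}. If K is a potential maximal clique of G', then exactly one of K and K ∪ {a} is a potential maximal clique of G; in particular K and K ∪ {a} cannot both be potential maximal cliques of G. -/

import Mathlib

open SimpleGraph

variable {V : Type*}

/-- `C` is a connected component of `G \ K`:
nonempty, disjoint from `K`, connected, and maximal such. -/
def IsCompOf (G : SimpleGraph V) (K C : Set V) : Prop :=
  C.Nonempty ∧ Disjoint C K ∧ (G.induce C).Connected ∧
    ∀ D : Set V, C ⊆ D → Disjoint D K → (G.induce D).Connected → D = C

/-- The neighborhood of a set `C`: vertices outside `C` with a neighbor in `C`. -/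
def nbhd (G : SimpleGraph V) (C : Set V) : Set V :=
  {v | v ∉ C ∧ ∃ u ∈ C, G.Adj u v}

/-- `C` is a full component for `K` in `G`. -/
def IsFullComp (G : SimpleGraph V) (K C : Set V) : Prop :=
  IsCompOf G K C ∧ ∀ v ∈ K, ∃ u ∈ C, G.Adj u v

/-- Bouchitté–Todinca characterization of potential maximal cliques:
(a) no full component, (b) non-adjacent pairs of `K` covered by a common component. -/
def IsPMC (G : SimpleGraph V) (K : Set V) : Prop :=
  (∀ C : Set V, IsCompOf G K C → ¬ ∀ v ∈ K, ∃ u ∈ C, G.Adj u v) ∧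
  (∀ x ∈ K, ∀ y ∈ K, x ≠ y → ¬ G.Adj x y →
    ∃ C : Set V, IsCompOf G K C ∧ (∃ u ∈ C, G.Adj u x) ∧ (∃ u ∈ C, G.Adj u y))

namespace StmtAux

open SimpleGraph Walk

/-- Walk characterization of connectivity of induced subgraphs. -/
lemma induce_connected_iff_walk {G : SimpleGraph V} {s : Set V} :
    (G.induce s).Connected ↔ s.Nonempty ∧
      ∀ u ∈ s, ∀ v ∈ s, ∃ p : G.Walk u v, ∀ x ∈ p.support, x ∈ s := by
  rw [connected_induce_iff, Subgraph.connected_iff_forall_exists_walk_subgraph]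
  simp only [Subgraph.induce_verts, Subgraph.verts_top]
  constructor
  · rintro ⟨hne, h⟩
    refine ⟨hne, fun u hu v hv => ?_⟩
    obtain ⟨p, hp⟩ := h hu hv
    refine ⟨p, fun x hx => ?_⟩
    have h1 := hp.1
    simp only [Subgraph.induce_verts, Subgraph.verts_top] at h1
    exact h1 ((p.mem_verts_toSubgraph).2 hx)
  · rintro ⟨hne, h⟩
    refine ⟨hne, @fun u v hu hv => ?_⟩
    obtain ⟨p, hp⟩ := h u hu v hv
    refine ⟨p, ⟨?_, @fun x y hxy => ?_⟩⟩
    · intro x hx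
      simp only [Subgraph.induce_verts, Subgraph.verts_top]
      exact hp x ((p.mem_verts_toSubgraph).1 hx)
    · rw [Subgraph.induce_adj]
      exact ⟨hp x ((p.mem_verts_toSubgraph).1 (p.toSubgraph.edge_vert hxy)),
        hp y ((p.mem_verts_toSubgraph).1 (p.toSubgraph.edge_vert hxy.symm)),
        by simpa using p.toSubgraph.adj_sub hxy⟩

/-- The connected component of `v` in `G - K`, as a set: all vertices reachable from `v`
by a walk avoiding `K`. -/
def comp (G : SimpleGraph V) (K : Set V) (v : V) : Set V :=
  {w | ∃ p : G.Walk v w, ∀ x ∈ p.support, x ∉ K}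

variable {G : SimpleGraph V} {K : Set V} {v : V}

lemma mem_comp_self (hv : v ∉ K) : v ∈ comp G K v :=
  ⟨Walk.nil, by simpa using hv⟩

lemma comp_disjoint : Disjoint (comp G K v) K := by
  rw [Set.disjoint_left]
  rintro w ⟨p, hp⟩
  exact hp w p.end_mem_support

lemma support_subset_comp {w : V} {p : G.Walk v w} (hp : ∀ x ∈ p.support, x ∉ K) :
    ∀ x ∈ p.support, x ∈ comp G K v := by
  classical
  intro x hx
  exact ⟨p.takeUntil x hx, fun y hy => hp y (p.support_takeUntil_subset hx hy)⟩

lemma comp_connected (hv : v ∉ K) : (G.induce (comp G K v)).Connected := by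
  rw [induce_connected_iff_walk]
  refine ⟨⟨v, mem_comp_self hv⟩, fun u hu w hw => ?_⟩
  obtain ⟨pu, hpu⟩ := hu
  obtain ⟨pw, hpw⟩ := hw
  refine ⟨pu.reverse.append pw, fun x hx => ?_⟩
  rcases (Walk.mem_support_append_iff _ _).1 hx with h | h
  · rw [Walk.support_reverse, List.mem_reverse] at h
    exact support_subset_comp hpu x h
  · exact support_subset_comp hpw x h

lemma subset_comp_of_connected {D : Set V} (hD : Disjoint D K)
    (hconn : (G.induce D).Connected) (hv : v ∈ D) : D ⊆ comp G K v := by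
  intro w hw
  rw [induce_connected_iff_walk] at hconn
  obtain ⟨p, hp⟩ := hconn.2 v hv w hw
  exact ⟨p, fun x hx => Set.disjoint_left.1 hD (hp x hx)⟩

lemma comp_isCompOf (hv : v ∉ K) : IsCompOf G K (comp G K v) := by
  refine ⟨⟨v, mem_comp_self hv⟩, comp_disjoint, comp_connected hv, ?_⟩
  intro D hCD hDK hDconn
  exact Set.Subset.antisymm (subset_comp_of_connected hDK hDconn (hCD (mem_comp_self hv))) hCD

lemma comp_eq {C : Set V} (hC : IsCompOf G K C) (hv : v ∈ C) : C = comp G K v := by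
  have hvK : v ∉ K := Set.disjoint_left.1 hC.2.1 hv
  have hsub : C ⊆ comp G K v := subset_comp_of_connected hC.2.1 hC.2.2.1 hv
  exact (hC.2.2.2 (comp G K v) hsub comp_disjoint (comp_connected hvK)).symm

/-- Lift a walk of `G` whose support lies in `s` to a walk of `G.induce s`. -/
lemma lift_walk {s : Set V} {u w : V} (p : G.Walk u w) :
    ∀ (hu : u ∈ s) (hw : w ∈ s), (∀ x ∈ p.support, x ∈ s) →
    ∃ q : (G.induce s).Walk ⟨u, hu⟩ ⟨w, hw⟩, ∀ x ∈ q.support, (x : V) ∈ p.support := by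
  induction p with
  | nil =>
    intro hu hw _
    exact ⟨Walk.nil, by simp⟩
  | @cons u b w h p ih =>
    intro hu hw hp
    have hb : b ∈ s := hp b (by simp)
    obtain ⟨q, hq⟩ := ih hb hw (fun x hx => hp x (by simp [hx]))
    have hadj : (G.induce s).Adj ⟨u, hu⟩ ⟨b, hb⟩ := h
    refine ⟨Walk.cons hadj q, fun x hx => ?_⟩
    rw [Walk.support_cons] at hx
    rcases List.mem_cons.1 hx with h' | h'
    · subst h'; simp
    · simp [hq x h']

lemma image_comp_subset {s : Set V} {L : Set s} {KK : Set V} {vt : s}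
    (h : ∀ x : s, x ∉ L → (x : V) ∉ KK) :
    Subtype.val '' comp (G.induce s) L vt ⊆ comp G KK (vt : V) := by
  rintro _ ⟨wt, ⟨q, hq⟩, rfl⟩
  refine ⟨q.map (SimpleGraph.Embedding.induce s).toHom, fun x hx => ?_⟩
  erw [Walk.support_map] at hx
  obtain ⟨y, hy, rfl⟩ := List.mem_map.1 hx
  exact h y (hq y hy)

lemma comp_subset_image {s : Set V} {L : Set s} {KK : Set V} {vt : s}
    (h : ∀ x ∈ comp G KK (vt : V), ∃ hx : x ∈ s, (⟨x, hx⟩ : s) ∉ L) :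
    comp G KK (vt : V) ⊆ Subtype.val '' comp (G.induce s) L vt := by
  rintro w ⟨p, hp⟩
  have hsupp : ∀ x ∈ p.support, x ∈ comp G KK (vt : V) := support_subset_comp hp
  obtain ⟨hw, hwL⟩ := h w (hsupp w p.end_mem_support)
  obtain ⟨q, hq⟩ := lift_walk p vt.2 hw (fun x hx => (h x (hsupp x hx)).1)
  refine ⟨⟨w, hw⟩, ⟨q, ?_⟩, rfl⟩
  intro x hx hxL
  obtain ⟨hx', hx'L⟩ := h (x : V) (hsupp _ (hq x hx))
  exact hx'L (by rwa [show (⟨(x : V), hx'⟩ : s) = x from Subtype.ext rfl])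

end StmtAux

open StmtAux in
theorem stmt4 [Fintype V] (G : SimpleGraph V) (a : V)
    (K : Set {v : V // v ∈ ({v : V | v ≠ a} : Set V)})
    (hK : IsPMC (G.induce {v : V | v ≠ a}) K) :
    Xor' (IsPMC G (Subtype.val '' K)) (IsPMC G (Subtype.val '' K ∪ {a})) := by
  classical
  have haK' : a ∉ Subtype.val '' K := by
    rintro ⟨x, hx, hxa⟩
    exact x.2 hxa
  have hmemK' : ∀ x : ({v : V | v ≠ a} : Set V),
      ((x : V) ∈ Subtype.val '' K ↔ x ∈ K) := fun x =>
    Subtype.val_injective.mem_set_image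
  -- transfer of components between G' - K and G - (K' ∪ {a})
  have hD1 : ∀ vt : ({v : V | v ≠ a} : Set V), vt ∉ K →
      Subtype.val '' comp (G.induce {v : V | v ≠ a}) K vt
        = comp G (Subtype.val '' K ∪ {a}) (vt : V) := by
    intro vt hvt
    apply Set.Subset.antisymm
    · apply image_comp_subset
      intro x hx
      rw [Set.mem_union, Set.mem_singleton_iff]
      push_neg
      exact ⟨fun h => hx ((hmemK' x).1 h), x.2⟩
    · apply comp_subset_image
      intro x hx
      have hxKa : x ∉ Subtype.val '' K ∪ {a} := Set.disjoint_left.1 comp_disjoint hx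
      rw [Set.mem_union, Set.mem_singleton_iff] at hxKa
      push_neg at hxKa
      exact ⟨hxKa.2, fun h => hxKa.1 ((hmemK' _).2 h)⟩
  have hD2a : ∀ Ct : Set ({v : V | v ≠ a} : Set V),
      IsCompOf (G.induce {v : V | v ≠ a}) K Ct →
      IsCompOf G (Subtype.val '' K ∪ {a}) (Subtype.val '' Ct) := by
    intro Ct hCt
    obtain ⟨vt, hvt⟩ := hCt.1
    have hvtK : vt ∉ K := Set.disjoint_left.1 hCt.2.1 hvt
    have hvtKa : (vt : V) ∉ Subtype.val '' K ∪ {a} := by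
      rw [Set.mem_union, Set.mem_singleton_iff]
      push_neg
      exact ⟨fun h => hvtK ((hmemK' vt).1 h), vt.2⟩
    rw [comp_eq hCt hvt, hD1 vt hvtK]
    exact comp_isCompOf hvtKa
  have hD2b : ∀ D : Set V, IsCompOf G (Subtype.val '' K ∪ {a}) D →
      ∃ Ct : Set ({v : V | v ≠ a} : Set V),
        IsCompOf (G.induce {v : V | v ≠ a}) K Ct ∧ D = Subtype.val '' Ct := by
    intro D hD
    obtain ⟨v, hv⟩ := hD.1
    have hvKa : v ∉ Subtype.val '' K ∪ {a} := Set.disjoint_left.1 hD.2.1 hv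
    rw [Set.mem_union, Set.mem_singleton_iff] at hvKa
    push_neg at hvKa
    have hvs : v ∈ ({v : V | v ≠ a} : Set V) := hvKa.2
    have hvtK : (⟨v, hvs⟩ : ({v : V | v ≠ a} : Set V)) ∉ K := fun h => hvKa.1 ((hmemK' _).2 h)
    refine ⟨comp (G.induce {v : V | v ≠ a}) K ⟨v, hvs⟩, comp_isCompOf hvtK, ?_⟩
    rw [hD1 _ hvtK, comp_eq hD hv]
  have hCaComp : IsCompOf G (Subtype.val '' K) (comp G (Subtype.val '' K) a) :=
    comp_isCompOf haK'
  by_cases hfull : ∀ v ∈ Subtype.val '' K, ∃ u ∈ comp G (Subtype.val '' K) a, G.Adj u v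
  · -- K' ∪ {a} is a PMC, K' is not
    refine Or.inr ⟨⟨?_, ?_⟩, ?_⟩
    · -- no full component for Ka
      intro D hD hfullD
      obtain ⟨Ct, hCt, rfl⟩ := hD2b D hD
      have hnf := hK.1 Ct hCt
      push_neg at hnf
      obtain ⟨vt, hvtK, hvt⟩ := hnf
      obtain ⟨u, hu, huadj⟩ := hfullD (vt : V) (Or.inl ((hmemK' vt).2 hvtK))
      obtain ⟨ut, hut, rfl⟩ := hu
      exact hvt ut hut huadj
    · -- covering condition for Ka
      intro x hx y hy hxy hnadj
      have pair : ∀ x' : V, x' ∈ Subtype.val '' K → ¬ G.Adj x' a →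
          ∃ C : Set V, IsCompOf G (Subtype.val '' K ∪ {a}) C ∧
            (∃ u ∈ C, G.Adj u x') ∧ (∃ u ∈ C, G.Adj u a) := by
        intro x' hx' hnadj'
        obtain ⟨u, hu, huadj⟩ := hfull x' hx'
        have hua : u ≠ a := by rintro rfl; exact hnadj' huadj.symm
        have huK' : u ∉ Subtype.val '' K := Set.disjoint_left.1 comp_disjoint hu
        have huKa : u ∉ Subtype.val '' K ∪ {a} := by
          rw [Set.mem_union, Set.mem_singleton_iff]; push_neg; exact ⟨huK', hua⟩
        obtain ⟨p, hp⟩ := hu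
        have hq : ∀ z ∈ p.bypass.support, z ∉ Subtype.val '' K :=
          fun z hz => hp z (p.support_bypass_subset hz)
        have hnotnil : ¬ p.bypass.Nil := Walk.not_nil_of_ne (Ne.symm hua)
        obtain ⟨b, hab, q', hq'eq⟩ := Walk.not_nil_iff.1 hnotnil
        have hpath := p.bypass_isPath
        rw [hq'eq, Walk.cons_isPath_iff] at hpath
        have hq'supp : ∀ z ∈ q'.support, z ∉ Subtype.val '' K ∪ {a} := by
          intro z hz
          rw [Set.mem_union, Set.mem_singleton_iff]
          push_neg
          refine ⟨hq z (by rw [hq'eq, Walk.support_cons]; exact List.mem_cons_of_mem _ hz), ?_⟩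
          rintro rfl
          exact hpath.2 hz
        have hb : b ∈ comp G (Subtype.val '' K ∪ {a}) u :=
          ⟨q'.reverse, fun z hz =>
            hq'supp z (by rwa [Walk.support_reverse, List.mem_reverse] at hz)⟩
        exact ⟨comp G (Subtype.val '' K ∪ {a}) u, comp_isCompOf huKa,
          ⟨u, mem_comp_self huKa, huadj⟩, ⟨b, hb, hab.symm⟩⟩
      rcases hx with hx | hx <;> rcases hy with hy | hy
      · -- both in K'
        obtain ⟨xt, hxt, rfl⟩ := hx
        obtain ⟨yt, hyt, rfl⟩ := hy
        have hne : xt ≠ yt := fun h => hxy (by rw [h])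
        obtain ⟨Ct, hCt, ⟨ut1, hut1, h1⟩, ⟨ut2, hut2, h2⟩⟩ :=
          hK.2 xt hxt yt hyt hne hnadj
        exact ⟨Subtype.val '' Ct, hD2a Ct hCt,
          ⟨ut1, Set.mem_image_of_mem _ hut1, h1⟩, ⟨ut2, Set.mem_image_of_mem _ hut2, h2⟩⟩
      · -- y = a
        rw [Set.mem_singleton_iff] at hy; subst hy
        exact pair x hx hnadj
      · -- x = a
        rw [Set.mem_singleton_iff] at hx; subst hx
        obtain ⟨C, hC, h1, h2⟩ := pair y hy (fun h => hnadj h.symm)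
        exact ⟨C, hC, h2, h1⟩
      · rw [Set.mem_singleton_iff] at hx hy; exact absurd (hx.trans hy.symm) hxy
    · -- K' is not a PMC: Ca is full for it
      intro hPMC
      exact hPMC.1 _ hCaComp hfull
  · -- K' is a PMC, K' ∪ {a} is not
    push_neg at hfull
    obtain ⟨v, hvK', hv⟩ := hfull
    refine Or.inl ⟨⟨?_, ?_⟩, ?_⟩
    · -- (a) no full component for K'
      intro C hC hfullC
      by_cases haC : a ∈ C
      · obtain ⟨u, hu, huadj⟩ := hfullC v hvK'
        rw [comp_eq hC haC] at hu
        exact hv u hu huadj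
      · obtain ⟨u, hu⟩ := hC.1
        have huK' : u ∉ Subtype.val '' K := Set.disjoint_left.1 hC.2.1 hu
        have hus : u ∈ ({v : V | v ≠ a} : Set V) := fun h : u = a => haC (h ▸ hu)
        have hutK : (⟨u, hus⟩ : ({v : V | v ≠ a} : Set V)) ∉ K :=
          fun h => huK' ((hmemK' _).2 h)
        have hCeq : C = comp G (Subtype.val '' K) u := comp_eq hC hu
        have himg : Subtype.val '' comp (G.induce {v : V | v ≠ a}) K ⟨u, hus⟩ = C := by
          apply Set.Subset.antisymm
          · rw [hCeq]
            exact image_comp_subset (fun x hx h => hx ((hmemK' x).1 h))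
          · rw [hCeq]
            refine comp_subset_image (vt := ⟨u, hus⟩) ?_
            intro x hx
            have hxK' : x ∉ Subtype.val '' K := Set.disjoint_left.1 comp_disjoint hx
            have hxa : x ∈ ({v : V | v ≠ a} : Set V) :=
              fun h : x = a => haC (by rw [hCeq]; exact h ▸ hx)
            exact ⟨hxa, fun h => hxK' ((hmemK' _).2 h)⟩
        have hCtComp := comp_isCompOf (G := G.induce {v : V | v ≠ a}) hutK
        have hnf := hK.1 _ hCtComp
        push_neg at hnf
        obtain ⟨vt, hvtK, hvt⟩ := hnf
        obtain ⟨u', hu', hu'adj⟩ := hfullC (vt : V) ((hmemK' vt).2 hvtK)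
        rw [← himg] at hu'
        obtain ⟨ut', hut', rfl⟩ := hu'
        exact hvt ut' hut' hu'adj
    · -- (b) for K'
      intro x hx y hy hxy hnadj
      obtain ⟨xt, hxt, rfl⟩ := hx
      obtain ⟨yt, hyt, rfl⟩ := hy
      have hne : xt ≠ yt := fun h => hxy (by rw [h])
      obtain ⟨Ct, hCt, ⟨ut1, hut1, h1⟩, ⟨ut2, hut2, h2⟩⟩ := hK.2 xt hxt yt hyt hne hnadj
      obtain ⟨wt, hwt⟩ := hCt.1
      have hwtK : wt ∉ K := Set.disjoint_left.1 hCt.2.1 hwt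
      have hwK' : (wt : V) ∉ Subtype.val '' K := fun h => hwtK ((hmemK' _).1 h)
      have hsub : Subtype.val '' Ct ⊆ comp G (Subtype.val '' K) (wt : V) := by
        rw [comp_eq hCt hwt]
        exact image_comp_subset (fun x hx h => hx ((hmemK' x).1 h))
      exact ⟨comp G (Subtype.val '' K) (wt : V), comp_isCompOf hwK',
        ⟨ut1, hsub (Set.mem_image_of_mem _ hut1), h1⟩,
        ⟨ut2, hsub (Set.mem_image_of_mem _ hut2), h2⟩⟩
    · -- Ka is not a PMC
      intro hPMC
      have hva : ¬ G.Adj v a := fun h => hv a (mem_comp_self haK') h.symm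
      have hvne : v ≠ a := fun h => haK' (h ▸ hvK')
      obtain ⟨D, hD, ⟨u1, hu1, h1⟩, ⟨u2, hu2, h2⟩⟩ :=
        hPMC.2 v (Or.inl hvK') a (Or.inr rfl) hvne hva
      have hDsub : D ⊆ comp G (Subtype.val '' K) a := by
        rw [comp_eq hD hu2]
        rintro w ⟨p, hp⟩
        refine ⟨Walk.cons h2.symm p, ?_⟩
        intro z hz
        rw [Walk.support_cons] at hz
        rcases List.mem_cons.1 hz with h | h
        · subst h; exact haK'
        · exact fun hzK' => hp z h ((Set.mem_union _ _ _).2 (Or.inl hzK'))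
      exact hv u1 (hDsub hu1) h1
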